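/- For fixed data size ℓ > 0, the objective of Problem P1-B, namely the function (R, t) ↦ (q_r + q_s + q_c·C(R,ε))·ℓ + (t/h)·f(ℓ/(t·R)), is convex on the set {(R, t) : R ≥ 1, t > 0}. -/

import Mathlib

open Real Set

private lemma pos_combo {a b t1 t2 : ℝ} (ha : 0 ≤ a) (hb : 0 ≤ b) (hab : a + b = 1)
    (h1 : 0 < t1) (h2 : 0 < t2) : 0 < a * t1 + b * t2 := by
  rcases eq_or_lt_of_le ha with h | h
  · have hb1 : b = 1 := by linarith
    rw [← h, hb1]; simpa using h2
  · nlinarith [mul_pos h h1, mul_nonneg hb h2.le]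

private lemma inv_combo {a b R1 R2 : ℝ} (ha : 0 ≤ a) (hb : 0 ≤ b) (hab : a + b = 1)
    (h1 : 0 < R1) (h2 : 0 < R2) : 1 / (a * R1 + b * R2) ≤ a / R1 + b / R2 := by
  have hR : 0 < a * R1 + b * R2 := pos_combo ha hb hab h1 h2
  have hb' : b = 1 - a := by linarith
  subst hb'
  rw [div_add_div _ _ (ne_of_gt h1) (ne_of_gt h2), div_le_div_iff₀ hR (mul_pos h1 h2)]
  nlinarith [mul_nonneg (mul_nonneg ha hb) (sq_nonneg (R1 - R2))]

/-- joint convexity of `(R,t) ↦ t * exp (c / (t*R))`: the key inequality. -/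
private lemma key_ineq {c a b R1 R2 t1 t2 : ℝ} (hc : 0 < c)
    (ha : 0 ≤ a) (hb : 0 ≤ b) (hab : a + b = 1)
    (hR1 : 0 < R1) (hR2 : 0 < R2) (ht1 : 0 < t1) (ht2 : 0 < t2) :
    (a * t1 + b * t2) * Real.exp (c / ((a * t1 + b * t2) * (a * R1 + b * R2)))
      ≤ a * (t1 * Real.exp (c / (t1 * R1))) + b * (t2 * Real.exp (c / (t2 * R2))) := by
  set T := a * t1 + b * t2 with hTdef
  have hT : 0 < T := pos_combo ha hb hab ht1 ht2
  have hR : 0 < a * R1 + b * R2 := pos_combo ha hb hab hR1 hR2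
  set w1 := a * t1 / T with hw1def
  set w2 := b * t2 / T with hw2def
  have hw1 : 0 ≤ w1 := by positivity
  have hw2 : 0 ≤ w2 := by positivity
  have hw12 : w1 + w2 = 1 := by
    rw [hw1def, hw2def, ← add_div, hTdef, div_self (ne_of_gt hT)]
  set x1 := c / (t1 * R1) with hx1def
  set x2 := c / (t2 * R2) with hx2def
  -- convexity of exp
  have Hexp := convexOn_exp.2 (mem_univ x1) (mem_univ x2) hw1 hw2 hw12
  simp only [smul_eq_mul] at Hexp
  -- the weighted average of the arguments dominates the argument at the mean
  have harg : c / (T * (a * R1 + b * R2)) ≤ w1 * x1 + w2 * x2 := by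
    have h1 : w1 * x1 = a * (c / R1) / T := by
      rw [hw1def, hx1def]; field_simp
    have h2 : w2 * x2 = b * (c / R2) / T := by
      rw [hw2def, hx2def]; field_simp
    have hinv := inv_combo ha hb hab hR1 hR2
    have hmain : c / (a * R1 + b * R2) ≤ a * (c / R1) + b * (c / R2) := by
      calc c / (a * R1 + b * R2) = c * (1 / (a * R1 + b * R2)) := (mul_one_div c _).symm
        _ ≤ c * (a / R1 + b / R2) := mul_le_mul_of_nonneg_left hinv hc.le
        _ = a * (c / R1) + b * (c / R2) := by ring
    have hX : c / (T * (a * R1 + b * R2)) = (c / (a * R1 + b * R2)) / T := by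
      rw [div_div, mul_comm]
    rw [h1, h2, ← add_div, hX]
    gcongr
  have hmono : Real.exp (c / (T * (a * R1 + b * R2))) ≤ Real.exp (w1 * x1 + w2 * x2) :=
    Real.exp_le_exp.mpr harg
  calc T * Real.exp (c / (T * (a * R1 + b * R2)))
      ≤ T * Real.exp (w1 * x1 + w2 * x2) := mul_le_mul_of_nonneg_left hmono hT.le
    _ ≤ T * (w1 * Real.exp x1 + w2 * Real.exp x2) :=
        mul_le_mul_of_nonneg_left Hexp hT.le
    _ = a * (t1 * Real.exp x1) + b * (t2 * Real.exp x2) := by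
        rw [hw1def, hw2def]; field_simp

/-- For fixed data size `ℓ > 0`, the objective of Problem P1-B,
`(R, t) ↦ (q_r + q_s + q_c C(R,ε)) ℓ + (t/h) f(ℓ/(t R))`, with
`f(x) = N₀ (2^{x/B} − 1)` and `C(R,ε) = e^{εR} − e^{ε}`,
is convex on `{(R, t) : R ≥ 1, t > 0}`. -/
theorem P1B_objective_convex
    (N0 B qr qs qc h ε ℓ : ℝ)
    (hN0 : 0 < N0) (hB : 0 < B) (hqr : 0 < qr) (hqs : 0 < qs) (hqc : 0 < qc)
    (hh : 0 < h) (hε : 0 < ε) (hℓ : 0 < ℓ) :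
    ConvexOn ℝ {p : ℝ × ℝ | 1 ≤ p.1 ∧ 0 < p.2}
      (fun p : ℝ × ℝ =>
        (qr + qs + qc * (Real.exp (ε * p.1) - Real.exp ε)) * ℓ
          + (p.2 / h) * (N0 * ((2 : ℝ) ^ (ℓ / (p.2 * p.1) / B) - 1))) := by
  set c : ℝ := ℓ * Real.log 2 / B with hcdef
  have hc : 0 < c := by
    have : (0:ℝ) < Real.log 2 := Real.log_pos (by norm_num)
    positivity
  -- rewrite the function in exponential form
  have hfun : ∀ p : ℝ × ℝ,
      (qr + qs + qc * (Real.exp (ε * p.1) - Real.exp ε)) * ℓ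
          + (p.2 / h) * (N0 * ((2 : ℝ) ^ (ℓ / (p.2 * p.1) / B) - 1))
        = (qr + qs - qc * Real.exp ε) * ℓ + qc * ℓ * Real.exp (ε * p.1)
          + (N0 / h) * (p.2 * Real.exp (c / (p.2 * p.1))) - (N0 / h) * p.2 := by
    intro p
    rw [Real.rpow_def_of_pos (by norm_num : (0:ℝ) < 2)]
    have harg : Real.log 2 * (ℓ / (p.2 * p.1) / B) = c / (p.2 * p.1) := by
      rw [hcdef]; ring
    rw [harg]; ring
  have hfe : (fun p : ℝ × ℝ =>
      (qr + qs + qc * (Real.exp (ε * p.1) - Real.exp ε)) * ℓ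
          + (p.2 / h) * (N0 * ((2 : ℝ) ^ (ℓ / (p.2 * p.1) / B) - 1)))
      = fun p : ℝ × ℝ => (qr + qs - qc * Real.exp ε) * ℓ + qc * ℓ * Real.exp (ε * p.1)
          + (N0 / h) * (p.2 * Real.exp (c / (p.2 * p.1))) - (N0 / h) * p.2 :=
    funext hfun
  rw [hfe]
  constructor
  · -- convexity of the set
    intro x hx y hy a b ha hb hab
    obtain ⟨hx1, hx2⟩ := hx
    obtain ⟨hy1, hy2⟩ := hy
    constructor
    · show (1:ℝ) ≤ a * x.1 + b * y.1
      nlinarith [mul_le_mul_of_nonneg_left hx1 ha, mul_le_mul_of_nonneg_left hy1 hb]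
    · exact pos_combo ha hb hab hx2 hy2
  · intro x hx y hy a b ha hb hab
    obtain ⟨hx1, hx2⟩ := hx
    obtain ⟨hy1, hy2⟩ := hy
    have hx1' : (0:ℝ) < x.1 := lt_of_lt_of_le one_pos hx1
    have hy1' : (0:ℝ) < y.1 := lt_of_lt_of_le one_pos hy1
    simp only [smul_eq_mul, Prod.fst_add, Prod.snd_add, Prod.smul_fst, Prod.smul_snd]
    -- exp part
    have HA := convexOn_exp.2 (mem_univ (ε * x.1)) (mem_univ (ε * y.1)) ha hb hab
    simp only [smul_eq_mul] at HA
    have hargA : ε * (a * x.1 + b * y.1) = a * (ε * x.1) + b * (ε * y.1) := by ring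
    rw [hargA]
    have HA' : qc * ℓ * Real.exp (a * (ε * x.1) + b * (ε * y.1))
        ≤ qc * ℓ * (a * Real.exp (ε * x.1) + b * Real.exp (ε * y.1)) :=
      mul_le_mul_of_nonneg_left HA (by positivity)
    -- perspective part
    have HB := key_ineq hc ha hb hab hx1' hy1' hx2 hy2
    have HB' : (N0 / h) * ((a * x.2 + b * y.2)
          * Real.exp (c / ((a * x.2 + b * y.2) * (a * x.1 + b * y.1))))
        ≤ (N0 / h) * (a * (x.2 * Real.exp (c / (x.2 * x.1)))
          + b * (y.2 * Real.exp (c / (y.2 * y.1)))) :=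
      mul_le_mul_of_nonneg_left HB (by positivity)
    have step2 :
        (qr + qs - qc * Real.exp ε) * ℓ
          + qc * ℓ * (a * Real.exp (ε * x.1) + b * Real.exp (ε * y.1))
          + N0 / h * (a * (x.2 * Real.exp (c / (x.2 * x.1)))
              + b * (y.2 * Real.exp (c / (y.2 * y.1))))
          - N0 / h * (a * x.2 + b * y.2)
        = a * ((qr + qs - qc * Real.exp ε) * ℓ + qc * ℓ * Real.exp (ε * x.1)
              + N0 / h * (x.2 * Real.exp (c / (x.2 * x.1))) - N0 / h * x.2)
          + b * ((qr + qs - qc * Real.exp ε) * ℓ + qc * ℓ * Real.exp (ε * y.1)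
              + N0 / h * (y.2 * Real.exp (c / (y.2 * y.1))) - N0 / h * y.2) := by
      linear_combination (-((qr + qs - qc * Real.exp ε) * ℓ)) * hab
    rw [← step2]
    linarith [HA', HB']
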